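/- Let X be a real or complex linear space endowed with a seminorm ‖·‖ and let 1 < p < ∞. Suppose a series ∑_{k=0}^∞ u_k with terms in X is (C,1) summable to S ∈ X with respect to the seminorm (i.e., ‖σ_n − S‖ → 0) and that ∑_{k=n+1}^∞ ‖u_k‖^p = O(1/n^{p-1}) as n → ∞. Then ‖S_n − S‖ → 0 as n → ∞. -/

import Mathlib

open Filter Finset Topology

lemma key_identity {X : Type*} [SeminormedAddCommGroup X] [NormedSpace ℝ X]
    (u : ℕ → X) (S : X) (n d : ℕ) :
    (d : ℝ) • ((∑ k ∈ range (n + 1), u k) - S) =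
      ((∑ i ∈ range (n + d + 1), ∑ k ∈ range (i + 1), u k) - ((n + d : ℕ) + 1 : ℝ) • S)
      - ((∑ i ∈ range (n + 1), ∑ k ∈ range (i + 1), u k) - ((n : ℝ) + 1) • S)
      - ∑ i ∈ Ico (n + 1) (n + d + 1),
          ((∑ k ∈ range (i + 1), u k) - ∑ k ∈ range (n + 1), u k) := by
  have h1 : ∑ i ∈ Ico (n + 1) (n + d + 1), (∑ k ∈ range (i + 1), u k) =
      (∑ i ∈ range (n + d + 1), ∑ k ∈ range (i + 1), u k)
      - (∑ i ∈ range (n + 1), ∑ k ∈ range (i + 1), u k) :=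
    Finset.sum_Ico_eq_sub _ (by omega)
  have h2 : ∑ i ∈ Ico (n + 1) (n + d + 1),
      ((∑ k ∈ range (i + 1), u k) - ∑ k ∈ range (n + 1), u k) =
      (∑ i ∈ Ico (n + 1) (n + d + 1), (∑ k ∈ range (i + 1), u k))
      - (d : ℝ) • (∑ k ∈ range (n + 1), u k) := by
    rw [Finset.sum_sub_distrib, Finset.sum_const, Nat.card_Ico]
    have hd : n + d + 1 - (n + 1) = d := by omega
    rw [hd, ← Nat.cast_smul_eq_nsmul ℝ]
  rw [h2, h1]
  have : ((n + d : ℕ) + 1 : ℝ) • S = ((n : ℝ) + 1) • S + (d : ℝ) • S := by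
    rw [← add_smul]; congr 1; push_cast; ring
  rw [this, smul_sub]
  abel

set_option maxHeartbeats 1000000 in
theorem tauberian_cesaro_tail_bigO_seminorm
    {X : Type*} [SeminormedAddCommGroup X] [NormedSpace ℝ X]
    (u : ℕ → X) (S : X) (p : ℝ) (hp : 1 < p)
    (hC1 : Tendsto (fun n : ℕ =>
        ‖((n : ℝ) + 1)⁻¹ • (∑ i ∈ range (n + 1), ∑ k ∈ range (i + 1), u k) - S‖)
      atTop (𝓝 0))
    (hSummable : Summable fun k : ℕ => ‖u k‖ ^ p)
    (M : ℝ) (hM : 0 < M) (n₀ : ℕ)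
    (htail : ∀ n : ℕ, n₀ ≤ n →
        (∑' k : ℕ, ‖u (n + 1 + k)‖ ^ p) ≤ M / (n : ℝ) ^ (p - 1)) :
    Tendsto (fun n : ℕ => ‖(∑ k ∈ range (n + 1), u k) - S‖) atTop (𝓝 0) := by
  have hp0 : (0 : ℝ) < p := lt_trans one_pos hp
  have hr0 : (0 : ℝ) < p - 1 := by linarith
  rw [Metric.tendsto_atTop]
  intro ε hε
  -- choose δ
  set c : ℝ := (ε / 2) ^ p / M with hc_def
  have hc : 0 < c := by positivity
  set δ : ℝ := min (1 / 2) (c ^ (p - 1)⁻¹ / 2) with hδ_def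
  have hδ0 : 0 < δ := by positivity
  have hδhalf : δ ≤ 1 / 2 := min_le_left _ _
  have h2δ : 2 * δ ≤ c ^ (p - 1)⁻¹ := by
    have := min_le_right (1 / 2 : ℝ) (c ^ (p - 1)⁻¹ / 2)
    rw [hδ_def]; nlinarith [this]
  -- main bound on ((2δ)^(p-1) * M)^(p⁻¹)
  have hB : ((2 * δ) ^ (p - 1) * M) ^ p⁻¹ ≤ ε / 2 := by
    have h1 : (2 * δ) ^ (p - 1) ≤ c := by
      calc (2 * δ) ^ (p - 1) ≤ (c ^ (p - 1)⁻¹) ^ (p - 1) :=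
            Real.rpow_le_rpow (by positivity) h2δ hr0.le
        _ = c := Real.rpow_inv_rpow hc.le hr0.ne'
    have h2 : (2 * δ) ^ (p - 1) * M ≤ (ε / 2) ^ p := by
      rw [hc_def] at h1
      calc (2 * δ) ^ (p - 1) * M ≤ ((ε / 2) ^ p / M) * M := by
            apply mul_le_mul_of_nonneg_right h1 hM.le
        _ = (ε / 2) ^ p := by field_simp
    calc ((2 * δ) ^ (p - 1) * M) ^ p⁻¹ ≤ ((ε / 2) ^ p) ^ p⁻¹ :=
          Real.rpow_le_rpow (by positivity) h2 (by positivity)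
      _ = ε / 2 := Real.rpow_rpow_inv (by positivity) hp0.ne'
  -- eventual smallness of Cesàro errors
  have hεδ : 0 < ε * δ / 10 := by positivity
  obtain ⟨N₁, hN₁⟩ := (Metric.tendsto_atTop.mp hC1) (ε * δ / 10) hεδ
  refine ⟨max (max n₀ 1) (max N₁ ⌈1 / δ⌉₊), fun n hn => ?_⟩
  have hn₀ : n₀ ≤ n := le_trans (le_max_of_le_left (le_max_left _ _)) hn
  have hn1 : 1 ≤ n := le_trans (le_max_of_le_left (le_max_right _ _)) hn
  have hnN₁ : N₁ ≤ n := le_trans (le_max_of_le_right (le_max_left _ _)) hn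
  have hnδ : (1 : ℝ) ≤ δ * n := by
    have h1 : (⌈1 / δ⌉₊ : ℝ) ≤ n := by
      exact_mod_cast le_trans (le_max_of_le_right (le_max_right _ _)) hn
    have h2 : 1 / δ ≤ (n : ℝ) := le_trans (Nat.le_ceil _) h1
    rw [div_le_iff₀ hδ0] at h2
    linarith [h2]
  have hn0R : (0 : ℝ) < n := by exact_mod_cast hn1
  set d : ℕ := ⌈δ * n⌉₊ with hd_def
  have hd1 : 1 ≤ d := by
    rw [hd_def]
    exact_mod_cast Nat.one_le_ceil_iff.mpr (by positivity)
  have hd0R : (0 : ℝ) < d := by exact_mod_cast hd1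
  have hdge : δ * n ≤ (d : ℝ) := Nat.le_ceil _
  have hdle : (d : ℝ) ≤ 2 * δ * n := by
    have := Nat.ceil_lt_add_one (by positivity : (0:ℝ) ≤ δ * n)
    rw [hd_def]
    nlinarith [this, hnδ]
  set m : ℕ := n + d with hm_def
  have hmn : (m : ℝ) ≤ 2 * n := by
    have : (m : ℝ) = n + d := by exact_mod_cast rfl
    nlinarith [hdle, hδhalf, hn0R]
  -- Cesàro error terms
  have hEσ : ∀ j : ℕ, n ≤ j →
      ‖((j : ℝ) + 1)⁻¹ • (∑ i ∈ range (j + 1), ∑ k ∈ range (i + 1), u k) - S‖ < ε * δ / 10 := by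
    intro j hj
    have := hN₁ j (le_trans hnN₁ hj)
    rwa [Real.dist_eq, sub_zero, abs_of_nonneg (norm_nonneg _)] at this
  have hτ : ∀ j : ℕ, ‖(∑ i ∈ range (j + 1), ∑ k ∈ range (i + 1), u k) - ((j : ℝ) + 1) • S‖ =
      ((j : ℝ) + 1) * ‖((j : ℝ) + 1)⁻¹ • (∑ i ∈ range (j + 1), ∑ k ∈ range (i + 1), u k) - S‖ := by
    intro j
    have hj : ((j : ℝ) + 1) ≠ 0 := by positivity
    have heq : (∑ i ∈ range (j + 1), ∑ k ∈ range (i + 1), u k) - ((j : ℝ) + 1) • S =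
        ((j : ℝ) + 1) • (((j : ℝ) + 1)⁻¹ • (∑ i ∈ range (j + 1), ∑ k ∈ range (i + 1), u k) - S) := by
      rw [smul_sub, smul_smul, mul_inv_cancel₀ hj, one_smul]
    rw [heq, norm_smul, Real.norm_of_nonneg (by positivity)]
  -- T bound via Hölder
  set T : ℝ := ∑ k ∈ Ico (n + 1) (m + 1), ‖u k‖ with hT_def
  have hT0 : 0 ≤ T := Finset.sum_nonneg fun _ _ => norm_nonneg _
  have hQ : ∑ k ∈ Ico (n + 1) (m + 1), ‖u k‖ ^ p ≤ M / (n : ℝ) ^ (p - 1) := by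
    have hre : ∑ k ∈ Ico (n + 1) (m + 1), ‖u k‖ ^ p = ∑ j ∈ range d, ‖u (n + 1 + j)‖ ^ p := by
      rw [Finset.sum_Ico_eq_sum_range]
      have : m + 1 - (n + 1) = d := by omega
      rw [this]
    rw [hre]
    refine le_trans (Summable.sum_le_tsum (range d) (fun i _ => by positivity) ?_) (htail n hn₀)
    have := (summable_nat_add_iff (n + 1)).2 hSummable
    exact this.congr fun j => by rw [add_comm]
  have hHolder : T ^ p ≤ (d : ℝ) ^ (p - 1) * ∑ k ∈ Ico (n + 1) (m + 1), ‖u k‖ ^ p := by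
    have h := Real.rpow_sum_le_const_mul_sum_rpow (Ico (n + 1) (m + 1)) (fun k => ‖u k‖) hp.le
    have hcard : (#(Ico (n + 1) (m + 1)) : ℝ) = d := by
      rw [Nat.card_Ico]; norm_cast; omega
    simp only [abs_of_nonneg (norm_nonneg _)] at h
    rwa [hcard] at h
  have hTp : T ^ p ≤ (2 * δ) ^ (p - 1) * M := by
    have hnp : (0 : ℝ) < (n : ℝ) ^ (p - 1) := Real.rpow_pos_of_pos hn0R _
    calc T ^ p ≤ (d : ℝ) ^ (p - 1) * (M / (n : ℝ) ^ (p - 1)) := by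
          refine le_trans hHolder ?_
          exact mul_le_mul_of_nonneg_left hQ (by positivity)
      _ ≤ (2 * δ * n) ^ (p - 1) * (M / (n : ℝ) ^ (p - 1)) := by
          apply mul_le_mul_of_nonneg_right _ (by positivity)
          exact Real.rpow_le_rpow (by positivity) hdle hr0.le
      _ = (2 * δ) ^ (p - 1) * M := by
          rw [Real.mul_rpow (by positivity) hn0R.le]
          field_simp
  have hTle : T ≤ ε / 2 := by
    calc T = (T ^ p) ^ p⁻¹ := (Real.rpow_rpow_inv hT0 hp0.ne').symm
      _ ≤ ((2 * δ) ^ (p - 1) * M) ^ p⁻¹ :=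
          Real.rpow_le_rpow (by positivity) hTp (by positivity)
      _ ≤ ε / 2 := hB
  -- partial sum differences
  have hSpi : ∀ i ∈ Ico (n + 1) (m + 1),
      ‖(∑ k ∈ range (i + 1), u k) - ∑ k ∈ range (n + 1), u k‖ ≤ T := by
    intro i hi
    rw [Finset.mem_Ico] at hi
    have heq : (∑ k ∈ range (i + 1), u k) - ∑ k ∈ range (n + 1), u k =
        ∑ k ∈ Ico (n + 1) (i + 1), u k := (Finset.sum_Ico_eq_sub _ (by omega)).symm
    rw [heq, hT_def]
    refine le_trans (norm_sum_le _ _) ?_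
    exact Finset.sum_le_sum_of_subset_of_nonneg
      (Finset.Ico_subset_Ico le_rfl (by omega)) (fun _ _ _ => norm_nonneg _)
  have hSpi' : ∀ i ∈ Ico (n + 1) (m + 1),
      ‖(∑ k ∈ range (i + 1), u k) - ∑ k ∈ range (n + 1), u k‖ ≤ T := hSpi
  -- assemble
  have key := key_identity u S n d
  rw [show n + d = m from rfl] at key
  have hmain : (d : ℝ) * ‖(∑ k ∈ range (n + 1), u k) - S‖ ≤
      ((m : ℝ) + 1) * ‖((m : ℝ) + 1)⁻¹ • (∑ i ∈ range (m + 1), ∑ k ∈ range (i + 1), u k) - S‖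
      + ((n : ℝ) + 1) * ‖((n : ℝ) + 1)⁻¹ • (∑ i ∈ range (n + 1), ∑ k ∈ range (i + 1), u k) - S‖
      + (d : ℝ) * T := by
    have h1 : (d : ℝ) * ‖(∑ k ∈ range (n + 1), u k) - S‖ =
        ‖(d : ℝ) • ((∑ k ∈ range (n + 1), u k) - S)‖ := by
      rw [norm_smul, Real.norm_natCast]
    rw [h1, key]
    have hsum : ‖∑ i ∈ Ico (n + 1) (m + 1),
        ((∑ k ∈ range (i + 1), u k) - ∑ k ∈ range (n + 1), u k)‖ ≤ (d : ℝ) * T := by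
      refine le_trans (norm_sum_le _ _) ?_
      refine le_trans (Finset.sum_le_sum hSpi') ?_
      rw [Finset.sum_const, Nat.card_Ico, nsmul_eq_mul]
      have : m + 1 - (n + 1) = d := by omega
      rw [this]
    calc ‖((∑ i ∈ range (m + 1), ∑ k ∈ range (i + 1), u k) - ((m : ℕ) + 1 : ℝ) • S)
          - ((∑ i ∈ range (n + 1), ∑ k ∈ range (i + 1), u k) - ((n : ℝ) + 1) • S)
          - ∑ i ∈ Ico (n + 1) (m + 1),
              ((∑ k ∈ range (i + 1), u k) - ∑ k ∈ range (n + 1), u k)‖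
        ≤ ‖(∑ i ∈ range (m + 1), ∑ k ∈ range (i + 1), u k) - ((m : ℕ) + 1 : ℝ) • S‖
          + ‖(∑ i ∈ range (n + 1), ∑ k ∈ range (i + 1), u k) - ((n : ℝ) + 1) • S‖
          + ‖∑ i ∈ Ico (n + 1) (m + 1),
              ((∑ k ∈ range (i + 1), u k) - ∑ k ∈ range (n + 1), u k)‖ := by
          refine le_trans (norm_sub_le _ _) ?_
          exact add_le_add (norm_sub_le _ _) le_rfl
      _ ≤ ((m : ℝ) + 1) * ‖((m : ℝ) + 1)⁻¹ • (∑ i ∈ range (m + 1), ∑ k ∈ range (i + 1), u k) - S‖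
          + ((n : ℝ) + 1) * ‖((n : ℝ) + 1)⁻¹ • (∑ i ∈ range (n + 1), ∑ k ∈ range (i + 1), u k) - S‖
          + (d : ℝ) * T := by
          rw [hτ m, hτ n]
          exact add_le_add (add_le_add le_rfl le_rfl) hsum
  -- final numeric estimate
  have hEm := hEσ m (by omega)
  have hEn := hEσ n le_rfl
  have hfinal : (d : ℝ) * ‖(∑ k ∈ range (n + 1), u k) - S‖ < (d : ℝ) * ε := by
    have hn1R : (1 : ℝ) ≤ n := by exact_mod_cast hn1
    have hm1 : (m : ℝ) + 1 ≤ 3 * n := by linarith [hmn]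
    have hn1' : (n : ℝ) + 1 ≤ 2 * n := by linarith
    set A : ℝ := ‖((m : ℝ) + 1)⁻¹ • (∑ i ∈ range (m + 1), ∑ k ∈ range (i + 1), u k) - S‖ with hA_def
    set B : ℝ := ‖((n : ℝ) + 1)⁻¹ • (∑ i ∈ range (n + 1), ∑ k ∈ range (i + 1), u k) - S‖ with hB_def
    have hA0 : 0 ≤ A := norm_nonneg _
    have hB0 : 0 ≤ B := norm_nonneg _
    have h5 : ((m : ℝ) + 1) * A + ((n : ℝ) + 1) * B < 5 * n * (ε * δ / 10) := by
      have hm0 : (0 : ℝ) < (m : ℝ) + 1 := by positivity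
      have hn0 : (0 : ℝ) < (n : ℝ) + 1 := by positivity
      have e1 : ((m : ℝ) + 1) * A < ((m : ℝ) + 1) * (ε * δ / 10) :=
        mul_lt_mul_of_pos_left hEm hm0
      have e2 : ((n : ℝ) + 1) * B < ((n : ℝ) + 1) * (ε * δ / 10) :=
        mul_lt_mul_of_pos_left hEn hn0
      have e3 : ((m : ℝ) + 1) * (ε * δ / 10) ≤ 3 * n * (ε * δ / 10) :=
        mul_le_mul_of_nonneg_right hm1 hεδ.le
      have e4 : ((n : ℝ) + 1) * (ε * δ / 10) ≤ 2 * n * (ε * δ / 10) :=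
        mul_le_mul_of_nonneg_right hn1' hεδ.le
      linarith
    have h6 : 5 * (n : ℝ) * (ε * δ / 10) ≤ (d : ℝ) * (ε / 2) := by
      have : 5 * (n : ℝ) * (ε * δ / 10) = (δ * n) * (ε / 2) := by ring
      rw [this]
      exact mul_le_mul_of_nonneg_right hdge (by positivity)
    have h7 : (d : ℝ) * T ≤ (d : ℝ) * (ε / 2) :=
      mul_le_mul_of_nonneg_left hTle hd0R.le
    linarith [hmain, h5, h6, h7]
  have : ‖(∑ k ∈ range (n + 1), u k) - S‖ < ε := by
    have := (mul_lt_mul_iff_right₀ hd0R).mp hfinal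
    exact this
  rwa [Real.dist_eq, sub_zero, abs_of_nonneg (norm_nonneg _)]
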